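/- Incremental gradient deviation bound under relaxed WGC: suppose each $f_i$ is $L_i$-smooth with $L_{\max} = \max_i L_i$, $f = \frac{1}{n}\sum_i f_i$ attains its minimum $f(x^*)$, and $\frac{1}{n}\sum_{i=1}^n\|\nabla f_i(x)\|^2 \leq 2\alpha L(f(x)-f(x^*)) + \sigma^2$ for all $x$. For one epoch of the incremental gradient method $x_{j+1} = x_j - \eta \nabla f_{j+1}(x_j)$, $j = 0,\ldots,n-1$, with $\eta \leq \frac{1}{\sqrt{2} n L_{\max}}$: $\sum_{i=0}^{n-1}\|x_i - x_0\|^2 \leq 4\eta^2 n^3 \alpha L(f(x_0) - f(x^*)) + 2\eta^2 n^3 \sigma^2$. -/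

import Mathlib

noncomputable section

private lemma gauss_sum_cast (n : ℕ) :
    ∑ i ∈ Finset.range n, (i : ℝ) = n * (n - 1) / 2 := by
  induction n with
  | zero => simp
  | succ m ih => rw [Finset.sum_range_succ, ih]; push_cast; ring

set_option maxHeartbeats 1000000 in
/-- Incremental gradient within-epoch deviation bound under the relaxed weak
growth condition. -/
theorem ig_deviation_bound_relaxed_wgc
    (d n : ℕ) (hn : 0 < n)
    (f : Fin n → EuclideanSpace ℝ (Fin d) → ℝ)
    (hdiff : ∀ i, Differentiable ℝ (f i))
    (F : EuclideanSpace ℝ (Fin d) → ℝ)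
    (hF : F = fun x => (n : ℝ)⁻¹ * ∑ i, f i x)
    (L Lmax : ℝ) (hL : 0 < L) (hLmax : 0 < Lmax)
    (hsmooth : ∀ x y : EuclideanSpace ℝ (Fin d),
      ‖gradient F x - gradient F y‖ ≤ L * ‖x - y‖)
    (hsmooth_i : ∀ i, ∀ x y : EuclideanSpace ℝ (Fin d),
      ‖gradient (f i) x - gradient (f i) y‖ ≤ Lmax * ‖x - y‖)
    (xstar : EuclideanSpace ℝ (Fin d))
    (hmin : ∀ x, F xstar ≤ F x)
    (α σ : ℝ) (hα : 0 ≤ α) (hσ : 0 ≤ σ)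
    (hWGC : ∀ x, (n : ℝ)⁻¹ * ∑ i, ‖gradient (f i) x‖ ^ 2
      ≤ 2 * α * L * (F x - F xstar) + σ ^ 2)
    (η : ℝ) (hη0 : 0 < η) (hη : η ≤ 1 / (Real.sqrt 2 * n * Lmax))
    (x : ℕ → EuclideanSpace ℝ (Fin d))
    (hstep : ∀ j (h : j < n), x (j + 1) = x j - η • gradient (f ⟨j, h⟩) (x j)) :
    ∑ i ∈ Finset.range n, ‖x i - x 0‖ ^ 2
      ≤ 4 * η ^ 2 * n ^ 3 * α * L * (F (x 0) - F xstar)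
        + 2 * η ^ 2 * n ^ 3 * σ ^ 2 := by
  have hn' : (0:ℝ) < n := by exact_mod_cast hn
  obtain ⟨A, hAdef⟩ : ∃ A : ℕ → ℝ, A = fun j => ‖x j - x 0‖ := ⟨_, rfl⟩
  obtain ⟨p, hpdef⟩ : ∃ p : ℕ → ℝ,
      p = fun j => if h : j < n then ‖gradient (f ⟨j, h⟩) (x j)‖ else 0 := ⟨_, rfl⟩
  obtain ⟨q, hqdef⟩ : ∃ q : ℕ → ℝ,
      q = fun j => if h : j < n then ‖gradient (f ⟨j, h⟩) (x 0)‖ else 0 := ⟨_, rfl⟩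
  have hA0 : ∀ j, 0 ≤ A j := by intro j; rw [hAdef]; exact norm_nonneg _
  have hq0 : ∀ j, 0 ≤ q j := by
    intro j; rw [hqdef]; dsimp only; split <;> positivity
  -- Step 1: A i ≤ η * ∑_{j<i} p j  for i ≤ n
  have step1 : ∀ i, i ≤ n → A i ≤ η * ∑ j ∈ Finset.range i, p j := by
    intro i
    induction i with
    | zero => intro _; simp [hAdef]
    | succ k ih =>
      intro hk
      have hkn : k < n := hk
      have hAk := ih (le_of_lt hkn)
      have h1 : A (k+1) ≤ A k + η * p k := by
        rw [hAdef]
        dsimp only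
        rw [hstep k hkn]
        have he : x k - η • gradient (f ⟨k, hkn⟩) (x k) - x 0
            = (x k - x 0) - η • gradient (f ⟨k, hkn⟩) (x k) := by abel
        rw [he]
        calc ‖(x k - x 0) - η • gradient (f ⟨k, hkn⟩) (x k)‖
            ≤ ‖x k - x 0‖ + ‖η • gradient (f ⟨k, hkn⟩) (x k)‖ := norm_sub_le _ _
          _ = ‖x k - x 0‖ + η * p k := by
              rw [norm_smul, Real.norm_eq_abs, abs_of_pos hη0, hpdef]
              dsimp only
              rw [dif_pos hkn]
        -- rewrite back ‖x k - x 0‖ to A k? goal has explicit norms; fine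
      rw [Finset.sum_range_succ, mul_add]
      have : ‖x k - x 0‖ = A k := by rw [hAdef]
      rw [hAdef] at h1 ⊢
      dsimp only at h1 ⊢
      rw [hAdef] at hAk
      dsimp only at hAk
      linarith
  -- Step 2: p j ≤ q j + Lmax * A j
  have step2 : ∀ j, p j ≤ q j + Lmax * A j := by
    intro j
    rw [hpdef, hqdef, hAdef]
    dsimp only
    split
    · next h =>
      have hs := hsmooth_i ⟨j, h⟩ (x j) (x 0)
      have ht : ‖gradient (f ⟨j, h⟩) (x j)‖
          ≤ ‖gradient (f ⟨j, h⟩) (x 0)‖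
            + ‖gradient (f ⟨j, h⟩) (x j) - gradient (f ⟨j, h⟩) (x 0)‖ := by
        have := norm_add_le (gradient (f ⟨j, h⟩) (x 0))
          (gradient (f ⟨j, h⟩) (x j) - gradient (f ⟨j, h⟩) (x 0))
        simpa using this
      linarith
    · have : 0 ≤ Lmax * ‖x j - x 0‖ := by positivity
      linarith
  obtain ⟨G, hGdef⟩ : ∃ G : ℝ, G = ∑ j ∈ Finset.range n, q j ^ 2 := ⟨_, rfl⟩
  obtain ⟨S, hSdef⟩ : ∃ S : ℝ, S = ∑ j ∈ Finset.range n, A j ^ 2 := ⟨_, rfl⟩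
  have hG0 : 0 ≤ G := hGdef ▸ Finset.sum_nonneg fun j _ => sq_nonneg _
  have hS0 : 0 ≤ S := hSdef ▸ Finset.sum_nonneg fun j _ => sq_nonneg _
  -- Step 3: per-term squared bound
  have step3 : ∀ i, i < n → A i ^ 2 ≤ 2 * η ^ 2 * i * (G + Lmax ^ 2 * S) := by
    intro i hi
    have h1 : A i ≤ η * ∑ j ∈ Finset.range i, (q j + Lmax * A j) :=
      (step1 i hi.le).trans (mul_le_mul_of_nonneg_left
        (Finset.sum_le_sum fun j _ => step2 j) hη0.le)
    have h2 : A i ^ 2 ≤ η ^ 2 * (∑ j ∈ Finset.range i, (q j + Lmax * A j)) ^ 2 := by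
      rw [← mul_pow]
      exact pow_le_pow_left₀ (hA0 i) h1 2
    have h3 : (∑ j ∈ Finset.range i, (q j + Lmax * A j)) ^ 2
        ≤ i * ∑ j ∈ Finset.range i, (q j + Lmax * A j) ^ 2 := by
      have := sq_sum_le_card_mul_sum_sq (s := Finset.range i)
        (f := fun j => q j + Lmax * A j)
      simpa using this
    have h5 : ∑ j ∈ Finset.range i, (q j + Lmax * A j) ^ 2
        ≤ ∑ j ∈ Finset.range i, (2 * q j ^ 2 + 2 * (Lmax * A j) ^ 2) :=
      Finset.sum_le_sum fun j _ => by nlinarith [sq_nonneg (q j - Lmax * A j)]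
    have h6 : ∑ j ∈ Finset.range i, (2 * q j ^ 2 + 2 * (Lmax * A j) ^ 2)
        ≤ ∑ j ∈ Finset.range n, (2 * q j ^ 2 + 2 * (Lmax * A j) ^ 2) := by
      apply Finset.sum_le_sum_of_subset_of_nonneg
      · exact Finset.range_subset_range.2 hi.le
      · intro j _ _; positivity
    have h7 : ∑ j ∈ Finset.range n, (2 * q j ^ 2 + 2 * (Lmax * A j) ^ 2)
        = 2 * (G + Lmax ^ 2 * S) := by
      rw [hGdef, hSdef, mul_add, Finset.mul_sum, Finset.mul_sum, Finset.mul_sum,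
        ← Finset.sum_add_distrib]
      exact Finset.sum_congr rfl fun j _ => by ring
    have h4 : ∑ j ∈ Finset.range i, (q j + Lmax * A j) ^ 2
        ≤ 2 * (G + Lmax ^ 2 * S) := by
      rw [← h7]; exact h5.trans h6
    have hi0 : (0:ℝ) ≤ i := Nat.cast_nonneg i
    calc A i ^ 2 ≤ η ^ 2 * ((i:ℝ) * ∑ j ∈ Finset.range i, (q j + Lmax * A j) ^ 2) :=
          h2.trans (mul_le_mul_of_nonneg_left h3 (sq_nonneg η))
      _ ≤ η ^ 2 * ((i:ℝ) * (2 * (G + Lmax ^ 2 * S))) := by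
          have := mul_le_mul_of_nonneg_left h4 hi0
          exact mul_le_mul_of_nonneg_left this (sq_nonneg η)
      _ = 2 * η ^ 2 * i * (G + Lmax ^ 2 * S) := by ring
  -- Sum over i
  have hGS : 0 ≤ G + Lmax ^ 2 * S := by positivity
  have sumbound : S ≤ η ^ 2 * n * (n - 1) * (G + Lmax ^ 2 * S) := by
    have h1 : S ≤ ∑ i ∈ Finset.range n, 2 * η ^ 2 * i * (G + Lmax ^ 2 * S) := by
      nth_rewrite 1 [hSdef]
      exact Finset.sum_le_sum fun i hi => step3 i (Finset.mem_range.1 hi)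
    have h2 : ∑ i ∈ Finset.range n, 2 * η ^ 2 * (i:ℝ) * (G + Lmax ^ 2 * S)
        = 2 * η ^ 2 * (G + Lmax ^ 2 * S) * ∑ i ∈ Finset.range n, (i:ℝ) := by
      rw [Finset.mul_sum]
      exact Finset.sum_congr rfl fun i _ => by ring
    have h3 : 2 * η ^ 2 * (G + Lmax ^ 2 * S) * (∑ i ∈ Finset.range n, (i:ℝ))
        ≤ 2 * η ^ 2 * (G + Lmax ^ 2 * S) * (n * (n-1) / 2) := by
      apply mul_le_mul_of_nonneg_left (le_of_eq (gauss_sum_cast n))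
      positivity
    calc S ≤ 2 * η ^ 2 * (G + Lmax ^ 2 * S) * ∑ i ∈ Finset.range n, (i:ℝ) := by
          rw [← h2]; exact h1
      _ ≤ 2 * η ^ 2 * (G + Lmax ^ 2 * S) * (n * (n-1)/2) := h3
      _ = η ^ 2 * n * (n - 1) * (G + Lmax ^ 2 * S) := by ring
  -- η² bound
  have hη2 : η ^ 2 ≤ 1 / (2 * n ^ 2 * Lmax ^ 2) := by
    have hle := pow_le_pow_left₀ hη0.le hη 2
    calc η ^ 2 ≤ (1 / (Real.sqrt 2 * n * Lmax)) ^ 2 := hle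
      _ = 1 / (2 * n ^ 2 * Lmax ^ 2) := by
        rw [div_pow, one_pow, mul_pow, mul_pow, Real.sq_sqrt (by norm_num : (0:ℝ) ≤ 2)]
  have hn1 : (0:ℝ) ≤ (n:ℝ) - 1 := by
    have : (1:ℝ) ≤ n := by exact_mod_cast hn
    linarith
  -- coefficient bound: η² n (n-1) Lmax² ≤ 1/2
  have hcoef : η ^ 2 * n * (n - 1) * Lmax ^ 2 ≤ 1 / 2 := by
    have h1 : η ^ 2 * n * (n-1) * Lmax ^ 2
        ≤ (1 / (2 * n ^ 2 * Lmax ^ 2)) * n * (n-1) * Lmax ^ 2 :=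
      mul_le_mul_of_nonneg_right (mul_le_mul_of_nonneg_right
        (mul_le_mul_of_nonneg_right hη2 hn'.le) hn1) (sq_nonneg Lmax)
    have h2 : (1 / (2 * n ^ 2 * Lmax ^ 2)) * (n:ℝ) * (n-1) * Lmax ^ 2
        = (n - 1) / (2 * n) := by
      field_simp
    rw [h2] at h1
    refine h1.trans ?_
    rw [div_le_div_iff₀ (by linarith) (by norm_num)]
    linarith
  -- conclude S ≤ 2 η² n² G
  have Sbound : S ≤ 2 * η ^ 2 * n ^ 2 * G := by
    have e1 : η ^ 2 * n * (n-1) * (G + Lmax ^ 2 * S)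
        = η ^ 2 * n * (n-1) * G + (η ^ 2 * n * (n-1) * Lmax ^ 2) * S := by ring
    have e2 : (η ^ 2 * n * (n-1) * Lmax ^ 2) * S ≤ (1/2) * S :=
      mul_le_mul_of_nonneg_right hcoef hS0
    have e3 : η ^ 2 * n * (n-1) * G ≤ η ^ 2 * n ^ 2 * G := by
      have h4 : η ^ 2 * n * (n-1) ≤ η ^ 2 * n ^ 2 := by
        have h5 : (n:ℝ) - 1 ≤ n := by linarith
        have h6 := mul_le_mul_of_nonneg_left h5 (by positivity : (0:ℝ) ≤ η ^ 2 * n)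
        calc η ^ 2 * n * (n-1) = η ^ 2 * n * ((n:ℝ) - 1) := by ring
          _ ≤ η ^ 2 * n * n := h6
          _ = η ^ 2 * n ^ 2 := by ring
      exact mul_le_mul_of_nonneg_right h4 hG0
    linarith [sumbound]
  -- G via WGC
  have hGfin : G = ∑ i : Fin n, ‖gradient (f i) (x 0)‖ ^ 2 := by
    rw [hGdef, ← Fin.sum_univ_eq_sum_range (fun j => q j ^ 2) n]
    apply Finset.sum_congr rfl
    intro i _
    rw [hqdef]
    dsimp only
    rw [dif_pos i.isLt]
  have hGbound : G ≤ n * (2 * α * L * (F (x 0) - F xstar) + σ ^ 2) := by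
    have hw := hWGC (x 0)
    rw [← hGfin] at hw
    have h2 : G = n * ((n:ℝ)⁻¹ * G) := by field_simp
    rw [h2]
    exact mul_le_mul_of_nonneg_left hw hn'.le
  -- finish
  have final : S ≤ 2 * η ^ 2 * n ^ 2 * (n * (2 * α * L * (F (x 0) - F xstar) + σ ^ 2)) :=
    Sbound.trans (mul_le_mul_of_nonneg_left hGbound (by positivity))
  have hgoal : ∑ i ∈ Finset.range n, ‖x i - x 0‖ ^ 2 = S := by
    rw [hSdef, hAdef]
  rw [hgoal]
  calc S ≤ 2 * η ^ 2 * n ^ 2 * (n * (2 * α * L * (F (x 0) - F xstar) + σ ^ 2)) := final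
    _ = 4 * η ^ 2 * n ^ 3 * α * L * (F (x 0) - F xstar) + 2 * η ^ 2 * n ^ 3 * σ ^ 2 := by
      ring
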